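/- Let m ≥ 1 and λ be real numbers, μ ∈ ℝ, σ > 0, and let g(x) = c₀ + c₁x + c₂x² + c₃x³ be a real cubic polynomial. With locations P_k = μ + ξ_k·σ for k = 1,2, the per-variable weighted sum of Hong's two-point estimation scheme satisfies w₁·g(P₁) + w₂·g(P₂) = (1/m)·g(μ) + c₂·σ² + c₃·(3μσ² + λσ³). Equivalently, writing the Taylor form, w₁·g(P₁) + w₂·g(P₂) = (1/m)·g(μ) + (g''(μ)/2)·σ² + (g'''(μ)/6)·λ·σ³. -/

import Mathlib

lemma cubic_hasDerivAt (a b c d x : ℝ) :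
    HasDerivAt (fun y => a + b * y + c * y ^ 2 + d * y ^ 3)
      (b + 2 * c * x + 3 * d * x ^ 2) x := by
  have h := ((((hasDerivAt_id x).const_mul b).const_add a).add
      ((hasDerivAt_pow 2 x).const_mul c)).add ((hasDerivAt_pow 3 x).const_mul d)
  refine h.congr_deriv ?_
  push_cast; ring

lemma cubic_deriv (a b c d : ℝ) :
    deriv (fun y => a + b * y + c * y ^ 2 + d * y ^ 3)
      = fun x => b + 2 * c * x + 3 * d * x ^ 2 :=
  funext fun x => (cubic_hasDerivAt a b c d x).deriv

/-- For `m ≥ 1`, skewness parameter `λ`, mean `μ`, standard deviation `σ > 0`,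
and a cubic polynomial `g(x) = c₀ + c₁x + c₂x² + c₃x³`, the per-variable weighted
sum of Hong's two-point estimation scheme satisfies
`w₁·g(P₁) + w₂·g(P₂) = (1/m)·g(μ) + c₂·σ² + c₃·(3μσ² + λσ³)`; equivalently in
Taylor form, `w₁·g(P₁) + w₂·g(P₂) = (1/m)·g(μ) + (g''(μ)/2)·σ² + (g'''(μ)/6)·λ·σ³`. -/
theorem tpe_cubic_quadrature (m lam : ℝ) (hm : 1 ≤ m)
    (μ σ : ℝ) (hσ : 0 < σ)
    (c₀ c₁ c₂ c₃ : ℝ) (g : ℝ → ℝ)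
    (hg : ∀ x, g x = c₀ + c₁ * x + c₂ * x ^ 2 + c₃ * x ^ 3)
    (ξ₁ ξ₂ w₁ w₂ P₁ P₂ : ℝ)
    (hξ₁ : ξ₁ = lam / 2 + Real.sqrt (m + (lam / 2) ^ 2))
    (hξ₂ : ξ₂ = lam / 2 - Real.sqrt (m + (lam / 2) ^ 2))
    (hw₁ : w₁ = -(1 / m) * ξ₂ / (ξ₁ - ξ₂))
    (hw₂ : w₂ = (1 / m) * ξ₁ / (ξ₁ - ξ₂))
    (hP₁ : P₁ = μ + ξ₁ * σ) (hP₂ : P₂ = μ + ξ₂ * σ) :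
    w₁ * g P₁ + w₂ * g P₂ =
        (1 / m) * g μ + c₂ * σ ^ 2 + c₃ * (3 * μ * σ ^ 2 + lam * σ ^ 3) ∧
      w₁ * g P₁ + w₂ * g P₂ =
        (1 / m) * g μ + (iteratedDeriv 2 g μ / 2) * σ ^ 2 +
          (iteratedDeriv 3 g μ / 6) * lam * σ ^ 3 := by
  set s := Real.sqrt (m + (lam / 2) ^ 2) with hs
  have hmpos : (0:ℝ) < m := lt_of_lt_of_le one_pos hm
  have hm0 : m ≠ 0 := ne_of_gt hmpos
  have harg : (0:ℝ) < m + (lam / 2) ^ 2 := by positivity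
  have hs2 : s ^ 2 = m + (lam / 2) ^ 2 := Real.sq_sqrt harg.le
  have hspos : 0 < s := Real.sqrt_pos.mpr harg
  have hΔ : ξ₁ - ξ₂ = 2 * s := by rw [hξ₁, hξ₂]; ring
  have hΔ0 : ξ₁ - ξ₂ ≠ 0 := by rw [hΔ]; positivity
  have hprod : ξ₁ * ξ₂ = -m := by
    rw [hξ₁, hξ₂]; linear_combination -hs2
  have hsum : ξ₁ + ξ₂ = lam := by rw [hξ₁, hξ₂]; ring
  have hc : m * (ξ₁ - ξ₂) ≠ 0 := mul_ne_zero hm0 hΔ0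
  have hw₁' : w₁ * (m * (ξ₁ - ξ₂)) = -ξ₂ := by
    rw [hw₁]; field_simp; try rw [mul_inv_cancel₀ hm0]; try ring
  have hw₂' : w₂ * (m * (ξ₁ - ξ₂)) = ξ₁ := by
    rw [hw₂]; field_simp; try rw [mul_inv_cancel₀ hm0]; try ring
  have h0 : w₁ + w₂ = 1 / m := by
    rw [hw₁, hw₂, ← add_div, div_eq_div_iff hΔ0 hm0]; ring_nf
    rw [mul_inv_cancel₀ hm0]; ring
  have h1 : w₁ * ξ₁ + w₂ * ξ₂ = 0 := by
    refine mul_right_cancel₀ hc ?_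
    linear_combination ξ₁ * hw₁' + ξ₂ * hw₂'
  have h2 : w₁ * ξ₁ ^ 2 + w₂ * ξ₂ ^ 2 = 1 := by
    refine mul_right_cancel₀ hc ?_
    linear_combination ξ₁ ^ 2 * hw₁' + ξ₂ ^ 2 * hw₂' - (ξ₁ - ξ₂) * hprod
  have h3 : w₁ * ξ₁ ^ 3 + w₂ * ξ₂ ^ 3 = lam := by
    refine mul_right_cancel₀ hc ?_
    linear_combination ξ₁ ^ 3 * hw₁' + ξ₂ ^ 3 * hw₂' - (ξ₁ ^ 2 - ξ₂ ^ 2) * hprod +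
      m * (ξ₁ - ξ₂) * hsum
  have main : w₁ * g P₁ + w₂ * g P₂ =
      (1 / m) * g μ + c₂ * σ ^ 2 + c₃ * (3 * μ * σ ^ 2 + lam * σ ^ 3) := by
    rw [hg P₁, hg P₂, hg μ, hP₁, hP₂]
    linear_combination (c₀ + c₁ * μ + c₂ * μ ^ 2 + c₃ * μ ^ 3) * h0 +
      (c₁ * σ + 2 * c₂ * μ * σ + 3 * c₃ * μ ^ 2 * σ) * h1 +
      (c₂ * σ ^ 2 + 3 * c₃ * μ * σ ^ 2) * h2 + c₃ * σ ^ 3 * h3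
  have hgf : g = fun x => c₀ + c₁ * x + c₂ * x ^ 2 + c₃ * x ^ 3 := funext hg
  have e1 : deriv g = fun x => c₁ + 2 * c₂ * x + 3 * c₃ * x ^ 2 := by
    rw [hgf]; exact cubic_deriv _ _ _ _
  have e2 : deriv (fun x => c₁ + 2 * c₂ * x + 3 * c₃ * x ^ 2)
      = fun x => 2 * c₂ + 6 * c₃ * x := by
    have hfun : (fun x : ℝ => c₁ + 2 * c₂ * x + 3 * c₃ * x ^ 2)
        = fun x => c₁ + (2 * c₂) * x + (3 * c₃) * x ^ 2 + 0 * x ^ 3 := by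
      funext x; ring
    rw [hfun, cubic_deriv]; funext x; ring
  have e3 : deriv (fun x : ℝ => 2 * c₂ + 6 * c₃ * x) = fun _ => 6 * c₃ := by
    have hfun : (fun x : ℝ => 2 * c₂ + 6 * c₃ * x)
        = fun x => 2 * c₂ + (6 * c₃) * x + 0 * x ^ 2 + 0 * x ^ 3 := by
      funext x; ring
    rw [hfun, cubic_deriv]; funext x; ring
  have hd2 : iteratedDeriv 2 g μ = 2 * c₂ + 6 * c₃ * μ := by
    rw [show (2:ℕ) = 1 + 1 from rfl, iteratedDeriv_succ, iteratedDeriv_one, e1, e2]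
  have hd3 : iteratedDeriv 3 g μ = 6 * c₃ := by
    rw [show (3:ℕ) = 2 + 1 from rfl, iteratedDeriv_succ,
      show (2:ℕ) = 1 + 1 from rfl, iteratedDeriv_succ, iteratedDeriv_one, e1, e2, e3]
  refine ⟨main, ?_⟩
  rw [main, hd2, hd3]; ring
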